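/- Let S ⊆ ℝⁿ be a closed set, x̄ ∈ S, and d ∈ T_S(x̄). Then T²_S(x̄; d) + T̂_S(x̄; d) = T²_S(x̄; d), where T̂_S(x̄; d) is the directional regular (Clarke) tangent cone. -/
import Mathlib


open Filter Topology Set Metric
open scoped RealInnerProductSpace Pointwise

noncomputable section

variable {E : Type*} [NormedAddCommGroup E] [InnerProductSpace ℝ E]

/-- Bouligand (contingent) tangent cone. -/
def tangentConeB (S : Set E) (x : E) : Set E :=
  {d | ∃ (t : ℕ → ℝ) (dk : ℕ → E), (∀ k, 0 < t k) ∧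
    Tendsto t atTop (nhds 0) ∧ Tendsto dk atTop (nhds d) ∧
    ∀ k, x + t k • dk k ∈ S}

/-- Outer second-order tangent set. -/
def secondTangent (S : Set E) (x d : E) : Set E :=
  {w | ∃ (t : ℕ → ℝ) (wk : ℕ → E), (∀ k, 0 < t k) ∧
    Tendsto t atTop (nhds 0) ∧ Tendsto wk atTop (nhds w) ∧
    ∀ k, x + t k • d + ((1/2 : ℝ) * t k ^ 2) • wk k ∈ S}

/-- Asymptotic second-order tangent cone. -/
def asympTangent (S : Set E) (x d : E) : Set E :=
  {w | ∃ (t r : ℕ → ℝ) (wk : ℕ → E), (∀ k, 0 < t k) ∧ (∀ k, 0 < r k) ∧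
    Tendsto t atTop (nhds 0) ∧ Tendsto r atTop (nhds 0) ∧
    Tendsto (fun k => t k / r k) atTop (nhds 0) ∧
    Tendsto wk atTop (nhds w) ∧
    ∀ k, x + t k • d + ((1/2 : ℝ) * t k * r k) • wk k ∈ S}

/-- Fréchet (regular) normal cone (empty, by convention, outside of `S`). -/
def frechetNormal (S : Set E) (x : E) : Set E :=
  {v | x ∈ S ∧ ∀ ε > (0:ℝ), ∃ δ > (0:ℝ), ∀ y ∈ S, ‖y - x‖ < δ →
    ⟪v, y - x⟫ ≤ ε * ‖y - x‖}

/-- Limiting (Mordukhovich) normal cone. -/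
def limitingNormal (S : Set E) (x : E) : Set E :=
  {v | ∃ (xk vk : ℕ → E), Tendsto xk atTop (nhds x) ∧
    Tendsto vk atTop (nhds v) ∧ ∀ k, vk k ∈ frechetNormal S (xk k)}

/-- Directional limiting normal cone. -/
def dirLimitingNormal (S : Set E) (x d : E) : Set E :=
  {v | ∃ (t : ℕ → ℝ) (dk vk : ℕ → E), (∀ k, 0 < t k) ∧
    Tendsto t atTop (nhds 0) ∧ Tendsto dk atTop (nhds d) ∧
    Tendsto vk atTop (nhds v) ∧ ∀ k, vk k ∈ frechetNormal S (x + t k • dk k)}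

/-- Directional regular (Clarke) tangent cone. -/
def dirClarkeTangent (S : Set E) (x d : E) : Set E :=
  {v | ∀ (t : ℕ → ℝ) (dk : ℕ → E), (∀ k, 0 < t k) →
    Tendsto t atTop (nhds 0) → Tendsto dk atTop (nhds d) →
    (∀ k, x + t k • dk k ∈ S) →
    ∃ vk : ℕ → E, Tendsto vk atTop (nhds v) ∧
      ∀ k, vk k ∈ tangentConeB S (x + t k • dk k)}

/-- Directional neighborhood `V_{ρ,δ}(d)`. -/
def dirNbhd (d : E) (ρ δ : ℝ) : Set E :=
  {w | ‖w‖ ≤ δ ∧ ‖‖d‖ • w - ‖w‖ • d‖ ≤ ρ * ‖w‖ * ‖d‖}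

/-- Support function, with values in `EReal` (so that `σ_∅ = -∞`). -/
def suppFn (A : Set E) (l : E) : EReal :=
  ⨆ u ∈ A, ((⟪l, u⟫ : ℝ) : EReal)

lemma zero_mem_dirClarke (S : Set E) (x d : E) : (0:E) ∈ dirClarkeTangent S x d := by
  intro t dk ht ht0 hdk hmem
  refine ⟨fun _ => 0, tendsto_const_nhds, fun k => ?_⟩
  exact ⟨fun j => 1/(j+1:ℝ), fun _ => 0, fun j => by positivity,
    tendsto_one_div_add_atTop_nhds_zero_nat, tendsto_const_nhds,
    fun j => by simpa using hmem k⟩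

lemma uniform_step [ProperSpace E] {S : Set E} {x d v : E}
    (hv : v ∈ dirClarkeTangent S x d) :
    ∀ ε > (0:ℝ), ∃ δ > (0:ℝ), ∀ (τ : ℝ) (d' : E), 0 < τ → τ ≤ δ → ‖d' - d‖ ≤ δ →
      x + τ • d' ∈ S → ∀ σ > (0:ℝ), ∃ s u, 0 < s ∧ s ≤ σ ∧ ‖u - v‖ ≤ ε ∧
        x + τ • d' + s • u ∈ S := by
  intro ε hε
  by_contra h
  push_neg at h
  have h' := fun k : ℕ => h (1/(k+1 : ℝ)) (by positivity)
  choose τk dk' hτpos hτle hdle hmemk σk hσpos hbad using h'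
  have hτ0 : Tendsto τk atTop (nhds 0) :=
    squeeze_zero (fun k => (hτpos k).le) hτle tendsto_one_div_add_atTop_nhds_zero_nat
  have hd0 : Tendsto dk' atTop (nhds d) := by
    rw [tendsto_iff_norm_sub_tendsto_zero]
    exact squeeze_zero (fun k => norm_nonneg _) hdle tendsto_one_div_add_atTop_nhds_zero_nat
  obtain ⟨vk, hvk, hvkT⟩ := hv τk dk' hτpos hτ0 hd0 hmemk
  obtain ⟨K, hK⟩ := (Metric.tendsto_atTop.mp hvk) (ε/2) (by positivity)
  have hKd : dist (vk K) v < ε/2 := hK K le_rfl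
  obtain ⟨s, u, hspos, hs0, hu, hmem2⟩ := hvkT K
  -- find j with s j ≤ σ K and ‖u j - vk K‖ ≤ ε/2
  have h1 : ∀ᶠ j in atTop, s j < σk K := hs0.eventually_lt_const (hσpos K)
  have h2 : ∀ᶠ j in atTop, dist (u j) (vk K) < ε/2 :=
    Metric.tendsto_nhds.mp hu (ε/2) (by positivity)
  obtain ⟨j, hj1, hj2⟩ := (h1.and h2).exists
  refine hbad K (s j) (u j) (hspos j) hj1.le ?_ (hmem2 j)
  calc ‖u j - v‖ ≤ ‖u j - vk K‖ + ‖vk K - v‖ := norm_sub_le_norm_sub_add_norm_sub _ _ _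
    _ ≤ ε/2 + ε/2 := add_le_add (by rw [← dist_eq_norm]; exact hj2.le)
        (by rw [← dist_eq_norm]; exact hKd.le)
    _ = ε := by ring

lemma add_mem_secondTangent [ProperSpace E] {S : Set E} (hS : IsClosed S)
    {x d w v : E} (hx : x ∈ S)
    (hw : w ∈ secondTangent S x d) (hv : v ∈ dirClarkeTangent S x d) :
    w + v ∈ secondTangent S x d := by
  obtain ⟨t, wk, htpos, ht0, hwk, hmem⟩ := hw
  have hU := uniform_step hv
  set L : ℕ → ℝ := fun k => (1/2 : ℝ) * t k ^ 2 with hL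
  have hLpos : ∀ k, 0 < L k := fun k => by have := htpos k; positivity
  set p : ℕ → E := fun k => x + t k • d + L k • wk k + L k • v with hp
  -- Claim C
  have hC : ∀ ε > (0:ℝ), ∀ᶠ k in atTop, infDist (p k) S ≤ ε * L k := by
    intro ε hε
    obtain ⟨δ, hδ, hstep⟩ := hU ε hε
    have hb1 : ∀ᶠ k in atTop, t k < δ := ht0.eventually_lt_const hδ
    have hb2 : ∀ᶠ k in atTop,
        (1/2 : ℝ) * t k * (‖wk k‖ + ‖v‖ + ε) < δ := by
      have : Tendsto (fun k => (1/2 : ℝ) * t k * (‖wk k‖ + ‖v‖ + ε)) atTop (nhds 0) := by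
        have hn : Tendsto (fun k => ‖wk k‖ + ‖v‖ + ε) atTop (nhds (‖w‖ + ‖v‖ + ε)) :=
          ((hwk.norm.add tendsto_const_nhds).add tendsto_const_nhds)
        have := ((ht0.const_mul (1/2 : ℝ)).mul hn)
        simpa using this
      exact this.eventually_lt_const hδ
    filter_upwards [hb1, hb2] with k hk1 hk2
    set τ := t k with hτ
    have hτpos : 0 < τ := htpos k
    have hτne : τ ≠ 0 := hτpos.ne'
    set Lk := L k with hLk
    have hLkpos : 0 < Lk := hLpos k
    set z : E := x + τ • d + Lk • wk k with hz
    have hzS : z ∈ S := hmem k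
    set M : Set ℝ := {a | a ∈ Icc (0:ℝ) Lk ∧ infDist (z + a • v) S ≤ ε * a} with hM
    have h0M : (0:ℝ) ∈ M := by
      constructor
      · exact ⟨le_rfl, hLkpos.le⟩
      · simp [infDist_zero_of_mem hzS]
    have hbddM : BddAbove M := ⟨Lk, fun a ha => ha.1.2⟩
    have hclosedM : IsClosed M := by
      have hc1 : Continuous fun a : ℝ => infDist (z + a • v) S :=
        (continuous_infDist_pt S).comp (continuous_const.add (continuous_id.smul continuous_const))
      exact (isClosed_Icc).inter (isClosed_le hc1 (continuous_const.mul continuous_id))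
    set A := sSup M with hA
    have hAM : A ∈ M := hclosedM.csSup_mem ⟨0, h0M⟩ hbddM
    have hAle : A ≤ Lk := hAM.1.2
    have hA0 : 0 ≤ A := hAM.1.1
    have hAeq : A = Lk := by
      by_contra hne
      have hAlt : A < Lk := lt_of_le_of_ne hAle hne
      obtain ⟨y, hyS, hyd⟩ := hS.exists_infDist_eq_dist ⟨x, hx⟩ (z + A • v)
      have heb : ‖y - (z + A • v)‖ ≤ ε * A := by
        rw [← dist_eq_norm']
        exact hyd ▸ hAM.2
      set e : E := y - (z + A • v) with he
      set d'' : E := d + (Lk/τ) • wk k + τ⁻¹ • (A • v + e) with hd''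
      have hyeq : y = x + τ • d'' := by
        have h1 : τ • d'' = τ • d + Lk • wk k + (A • v + e) := by
          rw [hd'', smul_add, smul_add, smul_smul, smul_smul,
            mul_div_cancel₀ _ hτne, mul_inv_cancel₀ hτne, one_smul]
        rw [h1, he, hz]
        abel
      have htube : ‖d'' - d‖ ≤ δ := by
        have h1 : d'' - d = (Lk/τ) • wk k + τ⁻¹ • (A • v + e) := by rw [hd'']; abel
        have h2 : ‖d'' - d‖ ≤ (Lk/τ) * ‖wk k‖ + τ⁻¹ * (A * ‖v‖ + ε * A) := by
          rw [h1]
          refine (norm_add_le _ _).trans (add_le_add ?_ ?_)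
          · rw [norm_smul, Real.norm_eq_abs, abs_of_pos (by positivity)]
          · rw [norm_smul, Real.norm_eq_abs, abs_of_pos (by positivity)]
            refine mul_le_mul_of_nonneg_left ?_ (by positivity)
            refine (norm_add_le _ _).trans (add_le_add ?_ heb)
            rw [norm_smul, Real.norm_eq_abs, abs_of_nonneg hA0]
        have h3 : (Lk/τ) * ‖wk k‖ + τ⁻¹ * (A * ‖v‖ + ε * A)
            ≤ (1/2 : ℝ) * τ * (‖wk k‖ + ‖v‖ + ε) := by
          have hLτ : Lk/τ = (1/2:ℝ) * τ := by
            rw [hLk, hL]; field_simp; ring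
          have hAτ : τ⁻¹ * A ≤ (1/2:ℝ) * τ := by
            rw [← hLτ]
            rw [div_eq_mul_inv, mul_comm]
            exact mul_le_mul_of_nonneg_right hAle (by positivity)
          calc (Lk/τ) * ‖wk k‖ + τ⁻¹ * (A * ‖v‖ + ε * A)
              = (Lk/τ) * ‖wk k‖ + (τ⁻¹ * A) * ‖v‖ + (τ⁻¹ * A) * ε := by ring
            _ ≤ ((1/2:ℝ)*τ) * ‖wk k‖ + ((1/2:ℝ)*τ) * ‖v‖ + ((1/2:ℝ)*τ) * ε := by
                refine add_le_add (add_le_add (le_of_eq (by rw [hLτ]))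
                  (mul_le_mul_of_nonneg_right hAτ (norm_nonneg _)))
                  (mul_le_mul_of_nonneg_right hAτ hε.le)
            _ = (1/2 : ℝ) * τ * (‖wk k‖ + ‖v‖ + ε) := by ring
        exact (h2.trans h3).trans hk2.le
      obtain ⟨s, u, hspos, hsle, huv, hmemy⟩ :=
        hstep τ d'' hτpos hk1.le htube (by rw [← hyeq]; exact hyS) (Lk - A) (sub_pos.mpr hAlt)
      have hmemy' : y + s • u ∈ S := by rw [hyeq]; exact hmemy
      have hnew : A + s ∈ M := by
        refine ⟨⟨by positivity, by linarith⟩, ?_⟩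
        have hpt : y + s • u = z + (A + s) • v + (e + s • (u - v)) := by
          rw [he, add_smul, smul_sub]
          abel
        calc infDist (z + (A + s) • v) S ≤ dist (z + (A + s) • v) (y + s • u) :=
              infDist_le_dist_of_mem hmemy'
          _ = ‖e + s • (u - v)‖ := by
              rw [hpt, dist_eq_norm]
              have hh : z + (A + s) • v - (z + (A + s) • v + (e + s • (u - v)))
                  = -(e + s • (u - v)) := by abel
              rw [hh, norm_neg]
          _ ≤ ‖e‖ + s * ‖u - v‖ := by
              refine (norm_add_le _ _).trans (add_le_add le_rfl ?_)
              rw [norm_smul, Real.norm_eq_abs, abs_of_pos hspos]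
          _ ≤ ε * A + s * ε := add_le_add heb (mul_le_mul_of_nonneg_left huv hspos.le)
          _ = ε * (A + s) := by ring
      have : A + s ≤ A := le_csSup hbddM hnew
      linarith
    have hpe : p k = z + Lk • v := rfl
    rw [hpe, ← hAeq]
    exact hAM.2
  -- choose nearest points
  have hnear := fun k => hS.exists_infDist_eq_dist ⟨x, hx⟩ (p k)
  choose y hyS hyd using hnear
  refine ⟨t, fun k => wk k + v + (L k)⁻¹ • (y k - p k), htpos, ht0, ?_, ?_⟩
  · have h0 : Tendsto (fun k => (L k)⁻¹ • (y k - p k)) atTop (nhds 0) := by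
      rw [NormedAddCommGroup.tendsto_nhds_zero]
      intro ε hε
      filter_upwards [hC (ε/2) (by positivity)] with k hk
      have hLk := hLpos k
      have : ‖(L k)⁻¹ • (y k - p k)‖ = (L k)⁻¹ * ‖y k - p k‖ := by
        rw [norm_smul, Real.norm_eq_abs, abs_of_pos (by positivity)]
      rw [this]
      have h1 : ‖y k - p k‖ ≤ (ε/2) * L k := by
        rw [← dist_eq_norm']; exact (hyd k) ▸ hk
      calc (L k)⁻¹ * ‖y k - p k‖ ≤ (L k)⁻¹ * ((ε/2) * L k) :=
            mul_le_mul_of_nonneg_left h1 (by positivity)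
        _ = ε/2 := by field_simp
        _ < ε := by linarith
    have hconv : Tendsto (fun k => wk k + v + (L k)⁻¹ • (y k - p k)) atTop (nhds (w + v + 0)) :=
      (hwk.add (tendsto_const_nhds : Tendsto (fun _ : ℕ => v) atTop (nhds v))).add h0
    simpa using hconv
  · intro k
    have hLk := (hLpos k).ne'
    have : x + t k • d + ((1/2 : ℝ) * t k ^ 2) • (wk k + v + (L k)⁻¹ • (y k - p k)) = y k := by
      have hLL : ((1/2 : ℝ) * t k ^ 2) = L k := rfl
      rw [hLL, smul_add, smul_add, smul_inv_smul₀ hLk]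
      have hpk : p k = x + t k • d + L k • wk k + L k • v := rfl
      rw [hpk]
      abel
    rw [this]
    exact hyS k

theorem stmt4 {n : ℕ} (S : Set (EuclideanSpace ℝ (Fin n))) (hS : IsClosed S)
    (x : EuclideanSpace ℝ (Fin n)) (hx : x ∈ S) (d : EuclideanSpace ℝ (Fin n))
    (hd : d ∈ tangentConeB S x) :
    secondTangent S x d + dirClarkeTangent S x d = secondTangent S x d := by
  ext w
  simp only [Set.mem_add]
  constructor
  · rintro ⟨a, ha, b, hb, rfl⟩
    exact add_mem_secondTangent hS hx ha hb
  · intro hwA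
    exact ⟨w, hwA, 0, zero_mem_dirClarke S x d, add_zero w⟩
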